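/- Let k ≥ 2. If there exists a proportional and strategyproof committee rule for committee size k+1, for k+1 voters, and for k+2 candidates, then there also exists a proportional and strategyproof committee rule for committee size k, for k voters, and for k+1 candidates. -/

import Mathlib

open scoped Classical

/-!
Common framework: candidates are `Fin m`, voters are `Fin n`, committee size `k`.
An approval ballot is a nonempty proper subset of the candidate set.
"at least n/k voters" is encoded as `n ≤ k * (number of such voters)`,
and "strictly more than n/(k+1) voters" as `n < (k+1) * (number of such voters)`.
-/

/-- A valid approval ballot: a nonempty proper subset of the candidate set. -/
def ValidBallot (m : ℕ) (A : Finset (Fin m)) : Prop :=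
  A.Nonempty ∧ A ≠ Finset.univ

/-- A valid profile: every voter submits a valid ballot, and the ballots jointly
approve at least `k` candidates (so the committee can be filled with approved candidates). -/
def ValidProfile (m n k : ℕ) (P : Fin n → Finset (Fin m)) : Prop :=
  (∀ i, ValidBallot m (P i)) ∧ k ≤ (Finset.univ.biUnion P).card

/-- `f` is an (approval-based) committee rule: on every valid profile it returns a
committee of cardinality `k`. -/
def IsCommitteeRule (m n k : ℕ) (f : (Fin n → Finset (Fin m)) → Finset (Fin m)) : Prop :=
  ∀ P, ValidProfile m n k P → (f P).card = k

/-- `P'` is an `i`-variant of `P`: they agree on all voters other than `i`. -/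
def IVariant {m n : ℕ} (P P' : Fin n → Finset (Fin m)) (i : Fin n) : Prop :=
  ∀ j, j ≠ i → P' j = P j

/-- Strategyproofness: a voter reporting a proper subset of her truthful ballot never
obtains a committee whose intersection with her truthful ballot strictly grows. -/
def Strategyproof (m n k : ℕ) (f : (Fin n → Finset (Fin m)) → Finset (Fin m)) : Prop :=
  ∀ P P' (i : Fin n), ValidProfile m n k P → ValidProfile m n k P' →
    IVariant P P' i → P' i ⊂ P i → ¬ (f P ∩ P i ⊂ f P' ∩ P i)

/-- Superset-strategyproofness: no i-variant (with arbitrary new ballot) yields a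
committee whose intersection with the truthful ballot strictly grows. -/
def SupersetStrategyproof (m n k : ℕ) (f : (Fin n → Finset (Fin m)) → Finset (Fin m)) : Prop :=
  ∀ P P' (i : Fin n), ValidProfile m n k P → ValidProfile m n k P' →
    IVariant P P' i → ¬ (f P ∩ P i ⊂ f P' ∩ P i)

/-- Cardinality-strategyproofness: no i-variant yields a committee containing strictly
more of the truthfully approved candidates. -/
def CardinalityStrategyproof (m n k : ℕ) (f : (Fin n → Finset (Fin m)) → Finset (Fin m)) : Prop :=
  ∀ P P' (i : Fin n), ValidProfile m n k P → ValidProfile m n k P' →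
    IVariant P P' i → ¬ ((f P ∩ P i).card < (f P' ∩ P i).card)

/-- Hamming-strategyproofness: no i-variant yields a committee at strictly smaller
Hamming distance (cardinality of the symmetric difference) from the truthful ballot. -/
def HammingStrategyproof (m n k : ℕ) (f : (Fin n → Finset (Fin m)) → Finset (Fin m)) : Prop :=
  ∀ P P' (i : Fin n), ValidProfile m n k P → ValidProfile m n k P' →
    IVariant P P' i → ¬ ((symmDiff (f P') (P i)).card < (symmDiff (f P) (P i)).card)

/-- A party-list profile: any two ballots are either equal or disjoint. -/
def PartyList {m n : ℕ} (P : Fin n → Finset (Fin m)) : Prop :=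
  ∀ i j, P i = P j ∨ Disjoint (P i) (P j)

/-- Proportionality: in a party-list profile where some singleton ballot `{c}` is
submitted by at least `n/k` voters, `c` is elected. -/
def Proportional (m n k : ℕ) (f : (Fin n → Finset (Fin m)) → Finset (Fin m)) : Prop :=
  ∀ P, ValidProfile m n k P → PartyList P →
    ∀ c : Fin m, n ≤ k * (Finset.univ.filter (fun i => P i = {c})).card → c ∈ f P

/-- Droop proportionality: in ANY profile where some singleton ballot `{c}` is submitted
by strictly more than `n/(k+1)` voters, `c` is elected. -/
def DroopProportional (m n k : ℕ) (f : (Fin n → Finset (Fin m)) → Finset (Fin m)) : Prop :=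
  ∀ P, ValidProfile m n k P →
    ∀ c : Fin m, n < (k + 1) * (Finset.univ.filter (fun i => P i = {c})).card → c ∈ f P

/-- Justified representation on party lists: in a party-list profile where some ballot `A`
is submitted by at least `n/k` voters, the committee intersects `A`. -/
def JROnPartyLists (m n k : ℕ) (f : (Fin n → Finset (Fin m)) → Finset (Fin m)) : Prop :=
  ∀ P, ValidProfile m n k P → PartyList P →
    ∀ A : Finset (Fin m), n ≤ k * (Finset.univ.filter (fun i => P i = A)).card →
      (f P ∩ A).Nonempty

/-- Justified representation: every group of at least `n/k` voters that jointly approve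
some common candidate is represented by at least one committee member approved by a
group member. -/
def JR (m n k : ℕ) (f : (Fin n → Finset (Fin m)) → Finset (Fin m)) : Prop :=
  ∀ P, ValidProfile m n k P → ∀ N' : Finset (Fin n),
    n ≤ k * N'.card → (∃ c : Fin m, ∀ i ∈ N', c ∈ P i) →
    (f P ∩ N'.biUnion P).Nonempty

/-- Disjoint diversity: in a party-list profile with at most `k` distinct parties,
the committee contains a member of each party. -/
def DisjointDiversity (m n k : ℕ) (f : (Fin n → Finset (Fin m)) → Finset (Fin m)) : Prop :=
  ∀ P, ValidProfile m n k P → PartyList P →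
    (Finset.univ.image P).card ≤ k → ∀ i : Fin n, (f P ∩ P i).Nonempty

/-- Weak efficiency: a candidate approved by no voter is never elected
(on profiles where the committee can be filled with approved candidates). -/
def WeakEfficiency (m n k : ℕ) (f : (Fin n → Finset (Fin m)) → Finset (Fin m)) : Prop :=
  ∀ P, ValidProfile m n k P → ∀ c : Fin m, (∀ i, c ∉ P i) → c ∉ f P

/-- The approval score of candidate `c`: the number of voters approving `c`. -/
def avScore (m n : ℕ) (P : Fin n → Finset (Fin m)) (c : Fin m) : ℕ :=
  (Finset.univ.filter (fun i => c ∈ P i)).card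

/-- `W` is the committee selected by Approval Voting with lexicographic tie-breaking:
it has size `k`, and every member beats every non-member, either by a strictly higher
approval score or by equal score and smaller index (lexicographic tie-breaking with
respect to the fixed linear order on the candidates `Fin m`). -/
def IsAVCommittee (m n k : ℕ) (P : Fin n → Finset (Fin m)) (W : Finset (Fin m)) : Prop :=
  W.card = k ∧ ∀ c ∈ W, ∀ d : Fin m, d ∉ W →
    (avScore m n P d < avScore m n P c ∨ (avScore m n P d = avScore m n P c ∧ c < d))

/-- Approval Voting with lexicographic tie-breaking: selects the `k` candidates with
highest approval score, breaking ties in favour of lexicographically smaller candidates. -/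
noncomputable def AV (m n k : ℕ) (P : Fin n → Finset (Fin m)) : Finset (Fin m) :=
  if h : ∃ W, IsAVCommittee m n k P W then h.choose else ∅

/-- The harmonic number `H r = 1 + 1/2 + ⋯ + 1/r`, with `H 0 = 0`. -/
def harm : ℕ → ℚ
  | 0 => 0
  | r + 1 => harm r + 1 / (r + 1)

/-- The PAV score of committee `W` in profile `P`: `∑ᵢ H(|P i ∩ W|)`. -/
def pavScore (m n : ℕ) (P : Fin n → Finset (Fin m)) (W : Finset (Fin m)) : ℚ :=
  ∑ i, harm ((P i ∩ W).card)

/-- Encoding used for lexicographic comparison of committees: a committee is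
lexicographically earlier iff its encoding is larger. -/
def pavEncode (m : ℕ) (W : Finset (Fin m)) : ℕ :=
  ∑ c ∈ W, 2 ^ (m - 1 - (c : ℕ))

/-- `W` is the PAV winner: a size-`k` committee maximizing the PAV score, and the
lexicographically first among all such maximizers. -/
def IsPAVWinner (m n k : ℕ) (P : Fin n → Finset (Fin m)) (W : Finset (Fin m)) : Prop :=
  W.card = k ∧
  (∀ W' : Finset (Fin m), W'.card = k → pavScore m n P W' ≤ pavScore m n P W) ∧
  (∀ W' : Finset (Fin m), W'.card = k → pavScore m n P W' = pavScore m n P W →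
    pavEncode m W' ≤ pavEncode m W)

/-- Proportional Approval Voting, breaking ties by the lexicographically first optimum. -/
noncomputable def PAV (m n k : ℕ) (P : Fin n → Finset (Fin m)) : Finset (Fin m) :=
  if h : ∃ W, IsPAVWinner m n k P W then h.choose else ∅

namespace Lemma5
open Finset
set_option linter.unusedSectionVars false

variable (k : ℕ)

/-- extra candidate -/
def xc : Fin (k + 2) := Fin.last (k + 1)

def emb (A : Finset (Fin (k + 1))) : Finset (Fin (k + 2)) := A.image Fin.castSucc

def Bstar : Finset (Fin (k + 2)) := Finset.univ \ {xc k}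

/-- interpolating profiles: voters below `t` have ballot `Bstar`,
voters in `[t, k)` have their embedded original ballot, voter `k` has `{x}`. -/
def mid (P : Fin k → Finset (Fin (k + 1))) (t : ℕ) : Fin (k + 1) → Finset (Fin (k + 2)) :=
  fun j => Fin.lastCases {xc k} (fun i => if (i : ℕ) < t then Bstar k else emb k (P i)) j

@[simp] lemma mid_last (P : Fin k → Finset (Fin (k + 1))) (t : ℕ) :
    mid k P t (Fin.last k) = {xc k} := by
  simp [mid]

@[simp] lemma mid_castSucc (P : Fin k → Finset (Fin (k + 1))) (t : ℕ) (i : Fin k) :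
    mid k P t (Fin.castSucc i) = if (i : ℕ) < t then Bstar k else emb k (P i) := by
  simp [mid]

lemma xc_not_mem_emb (A : Finset (Fin (k + 1))) : xc k ∉ emb k A := by
  simp only [emb, mem_image, not_exists]
  rintro c ⟨-, hc⟩
  exact absurd hc (Fin.ne_of_lt (Fin.castSucc_lt_last c))

lemma emb_subset_Bstar (A : Finset (Fin (k + 1))) : emb k A ⊆ Bstar k := by
  intro d hd
  simp only [Bstar, mem_sdiff, mem_univ, mem_singleton, true_and]
  rintro rfl
  exact xc_not_mem_emb k A hd

@[simp] lemma card_emb (A : Finset (Fin (k + 1))) : (emb k A).card = A.card :=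
  Finset.card_image_of_injective _ (Fin.castSucc_injective _)

@[simp] lemma card_Bstar : (Bstar k).card = k + 1 := by
  simp [Bstar, Finset.card_sdiff_of_subset (Finset.singleton_subset_iff.mpr (mem_univ _))]

lemma Bstar_ne_univ : Bstar k ≠ Finset.univ := by
  intro h
  have : xc k ∈ Bstar k := h ▸ mem_univ _
  simp [Bstar] at this

lemma emb_ssubset_Bstar {A : Finset (Fin (k + 1))} (hA : A ≠ Finset.univ) :
    emb k A ⊂ Bstar k := by
  rw [Finset.ssubset_iff_subset_ne]
  refine ⟨emb_subset_Bstar k A, fun h => ?_⟩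
  have h1 : A.card < k + 1 := by
    have := Finset.card_lt_card ((Finset.ssubset_univ_iff).mpr hA)
    simpa [Fintype.card_fin] using this
  have h2 : (emb k A).card = (Bstar k).card := by rw [h]
  rw [card_emb, card_Bstar] at h2
  omega

lemma mid_valid (P : Fin k → Finset (Fin (k + 1))) (hP : ValidProfile (k + 1) k k P)
    (t : ℕ) : ValidProfile (k + 2) (k + 1) (k + 1) (mid k P t) := by
  constructor
  · intro j
    refine Fin.lastCases ?_ (fun i => ?_) j
    · refine ⟨by simp [mid], ?_⟩
      rw [mid_last]
      intro h
      have h2 : ({xc k} : Finset (Fin (k + 2))).card = k + 2 := by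
        rw [h]; simp
      simp at h2
    · rw [mid_castSucc]
      split_ifs
      · exact ⟨by rw [← Finset.card_pos, card_Bstar]; omega, Bstar_ne_univ k⟩
      · obtain ⟨h1, h2⟩ := hP.1 i
        refine ⟨h1.image _, ?_⟩
        intro h
        exact xc_not_mem_emb k (P i) (h ▸ mem_univ _)
  · have hsub : insert (xc k) (emb k (Finset.univ.biUnion P)) ⊆
        Finset.univ.biUnion (mid k P t) := by
      intro d hd
      rcases Finset.mem_insert.mp hd with rfl | hd
      · exact Finset.mem_biUnion.mpr ⟨Fin.last k, mem_univ _, by simp⟩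
      · simp only [emb, mem_image] at hd
        obtain ⟨c, hc, rfl⟩ := hd
        obtain ⟨i, -, hci⟩ := Finset.mem_biUnion.mp hc
        refine Finset.mem_biUnion.mpr ⟨Fin.castSucc i, mem_univ _, ?_⟩
        rw [mid_castSucc]
        split_ifs
        · exact emb_subset_Bstar k (P i) (Finset.mem_image_of_mem _ hci)
        · exact Finset.mem_image_of_mem _ hci
    calc k + 1 ≤ (insert (xc k) (emb k (Finset.univ.biUnion P))).card := by
          rw [Finset.card_insert_of_notMem (xc_not_mem_emb k _), card_emb]
          have := hP.2
          omega
        _ ≤ _ := Finset.card_le_card hsub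

section Main

variable {k : ℕ} (f : (Fin (k + 1) → Finset (Fin (k + 2))) → Finset (Fin (k + 2)))
variable (hrule : IsCommitteeRule (k + 2) (k + 1) (k + 1) f)
variable (hprop : Proportional (k + 2) (k + 1) (k + 1) f)
variable (hsp : Strategyproof (k + 2) (k + 1) (k + 1) f)

include hrule hsp in
lemma chain (P : Fin k → Finset (Fin (k + 1))) (hP : ValidProfile (k + 1) k k P) :
    ∀ t, t ≤ k → xc k ∉ f (mid k P 0) → xc k ∉ f (mid k P t) := by
  intro t
  induction t with
  | zero => exact fun _ h => h
  | succ t ih =>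
    intro ht h0
    have ht' : t < k := ht
    have hnot : xc k ∉ f (mid k P t) := ih (le_of_lt ht') h0
    have hft : f (mid k P t) = Bstar k := by
      apply Finset.eq_of_subset_of_card_le
      · intro d hd
        simp only [Bstar, mem_sdiff, mem_univ, mem_singleton, true_and]
        rintro rfl; exact hnot hd
      · rw [card_Bstar, hrule _ (mid_valid k P hP t)]
    set i : Fin k := ⟨t, ht'⟩ with hi
    have hvar : IVariant (mid k P (t + 1)) (mid k P t) (Fin.castSucc i) := by
      intro j hj
      refine Fin.lastCases ?_ (fun i' hj' => ?_) j hj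
      · simp
      · have : (i' : ℕ) ≠ t := by
          intro h
          apply hj'
          rw [Fin.castSucc_inj]
          exact Fin.ext h
        rw [mid_castSucc, mid_castSucc]
        have : ((i' : ℕ) < t) ↔ ((i' : ℕ) < t + 1) := by omega
        simp [this]
    have hit : ((i : Fin k) : ℕ) = t := rfl
    have hss : mid k P t (Fin.castSucc i) ⊂ mid k P (t + 1) (Fin.castSucc i) := by
      rw [mid_castSucc, mid_castSucc, hit, if_neg (lt_irrefl t),
        if_pos (Nat.lt_succ_self t)]
      exact emb_ssubset_Bstar k (hP.1 i).2
    have hmid1 : mid k P (t + 1) (Fin.castSucc i) = Bstar k := by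
      rw [mid_castSucc, hit, if_pos (Nat.lt_succ_self t)]
    have hspc := hsp (mid k P (t + 1)) (mid k P t) (Fin.castSucc i)
      (mid_valid k P hP (t + 1)) (mid_valid k P hP t) hvar hss
    rw [hmid1, hft, Finset.inter_self] at hspc
    -- hspc : ¬ f (mid k P (t+1)) ∩ Bstar k ⊂ Bstar k
    intro hxin
    apply hspc
    rw [Finset.ssubset_iff_subset_ne]
    refine ⟨Finset.inter_subset_right, fun h => ?_⟩
    have hcard : (f (mid k P (t + 1)) ∩ Bstar k).card ≤ k := by
      have hsub : f (mid k P (t + 1)) ∩ Bstar k ⊆ (f (mid k P (t + 1))).erase (xc k) := by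
        intro d hd
        rcases Finset.mem_inter.mp hd with ⟨h1, h2⟩
        refine Finset.mem_erase.mpr ⟨?_, h1⟩
        simp only [Bstar, mem_sdiff, mem_singleton] at h2
        exact fun hh => h2.2 hh
      calc (f (mid k P (t + 1)) ∩ Bstar k).card ≤ _ := Finset.card_le_card hsub
        _ = (f (mid k P (t + 1))).card - 1 := Finset.card_erase_of_mem hxin
        _ ≤ k := by rw [hrule _ (mid_valid k P hP (t + 1))]; omega
    rw [h, card_Bstar] at hcard
    omega

include hrule hprop hsp in
lemma claimA (P : Fin k → Finset (Fin (k + 1))) (hP : ValidProfile (k + 1) k k P) :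
    xc k ∈ f (mid k P 0) := by
  by_contra h0
  have hend : xc k ∉ f (mid k P k) := chain f hrule hsp P hP k le_rfl h0
  apply hend
  refine hprop _ (mid_valid k P hP k) ?_ (xc k) ?_
  · -- party list
    intro a b
    have key : ∀ j : Fin (k + 1), mid k P k j = {xc k} ∨ mid k P k j = Bstar k := by
      intro j
      refine Fin.lastCases ?_ (fun i' => ?_) j
      · left; simp
      · right; rw [mid_castSucc, if_pos i'.isLt]
    have hdisj : Disjoint ({xc k} : Finset (Fin (k + 2))) (Bstar k) := by
      rw [Finset.disjoint_singleton_left]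
      simp [Bstar]
    rcases key a with ha | ha <;> rcases key b with hb | hb <;> rw [ha, hb]
    · left; rfl
    · right; exact hdisj
    · right; exact hdisj.symm
    · left; rfl
  · have hmem : Fin.last k ∈ Finset.univ.filter (fun j => mid k P k j = {xc k}) := by
      simp
    have h1 : 1 ≤ (Finset.univ.filter (fun j => mid k P k j = {xc k})).card :=
      Finset.card_pos.mpr ⟨_, hmem⟩
    calc k + 1 = (k + 1) * 1 := by ring
      _ ≤ _ := Nat.mul_le_mul_left _ h1

/-- The reduced rule. -/
noncomputable def g (P : Fin k → Finset (Fin (k + 1))) : Finset (Fin (k + 1)) :=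
  Finset.univ.filter (fun c => Fin.castSucc c ∈ f (mid k P 0))

include hrule hprop hsp in
lemma g_card (P : Fin k → Finset (Fin (k + 1))) (hP : ValidProfile (k + 1) k k P) :
    (g f P).card = k := by
  have hx := claimA f hrule hprop hsp P hP
  have hcard : (f (mid k P 0)).card = k + 1 := hrule _ (mid_valid k P hP 0)
  have hbij : (g f P).card = ((f (mid k P 0)).erase (xc k)).card := by
    refine Finset.card_bij (fun c _ => Fin.castSucc c) ?_ ?_ ?_
    · intro a ha
      simp only [g, mem_filter] at ha
      refine Finset.mem_erase.mpr ⟨Fin.ne_of_lt (Fin.castSucc_lt_last a), ha.2⟩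
    · intro a _ b _ hab
      exact Fin.castSucc_injective _ hab
    · intro b hb
      rcases Finset.mem_erase.mp hb with ⟨hb1, hb2⟩
      obtain ⟨a, rfl⟩ := Fin.exists_castSucc_eq.mpr hb1
      exact ⟨a, by simp [g, hb2], rfl⟩
  rw [hbij, Finset.card_erase_of_mem hx, hcard]
  omega

lemma inter_emb (P : Fin k → Finset (Fin (k + 1))) (A : Finset (Fin (k + 1))) :
    f (mid k P 0) ∩ emb k A = emb k (g f P ∩ A) := by
  ext d
  simp only [emb, Finset.mem_inter, Finset.mem_image, g, Finset.mem_filter, Finset.mem_univ,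
    true_and]
  constructor
  · rintro ⟨hd, c, hc, rfl⟩
    exact ⟨c, ⟨hd, hc⟩, rfl⟩
  · rintro ⟨c, ⟨hc1, hc2⟩, rfl⟩
    exact ⟨hc1, c, hc2, rfl⟩

lemma mid0_ivariant (P P' : Fin k → Finset (Fin (k + 1))) (i : Fin k)
    (h : IVariant P P' i) : IVariant (mid k P 0) (mid k P' 0) (Fin.castSucc i) := by
  intro j hj
  refine Fin.lastCases ?_ (fun i' hj' => ?_) j hj
  · simp
  · rw [mid_castSucc, mid_castSucc, if_neg (by omega), if_neg (by omega)]
    have : i' ≠ i := fun h' => hj' (by rw [h'])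
    rw [h i' this]

include hrule hprop hsp in
lemma g_prop (hk : 1 ≤ k) : Proportional (k + 1) k k (g f) := by
  intro P hP hpl c hcount
  have hpos : 1 ≤ (Finset.univ.filter (fun i => P i = {c})).card := by
    by_contra h
    have h0 : (Finset.univ.filter (fun i => P i = {c})).card = 0 := by omega
    rw [h0, Nat.mul_zero] at hcount
    omega
  obtain ⟨i0, hi0⟩ := Finset.card_pos.mp hpos
  rw [Finset.mem_filter] at hi0
  have hkey : Fin.castSucc c ∈ f (mid k P 0) := by
    refine hprop _ (mid_valid k P hP 0) ?_ (Fin.castSucc c) ?_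
    · intro a b
      refine Fin.lastCases ?_ (fun a' => ?_) a <;>
        refine Fin.lastCases ?_ (fun b' => ?_) b
      · left; rfl
      · right
        rw [mid_last, mid_castSucc, if_neg (by omega), Finset.disjoint_singleton_left]
        exact xc_not_mem_emb k _
      · right
        rw [mid_last, mid_castSucc, if_neg (by omega), Finset.disjoint_singleton_right]
        exact xc_not_mem_emb k _
      · rw [mid_castSucc, mid_castSucc, if_neg (by omega), if_neg (by omega)]
        rcases hpl a' b' with h | h
        · left; rw [h]
        · right
          rw [Finset.disjoint_left]
          simp only [emb, Finset.mem_image]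
          rintro d ⟨u, hu, rfl⟩ ⟨v, hv, hvu⟩
          rw [Fin.castSucc_inj] at hvu
          subst hvu
          exact (Finset.disjoint_left.mp h hu) hv
    · have hmem : Fin.castSucc i0 ∈
          Finset.univ.filter (fun j => mid k P 0 j = {Fin.castSucc c}) := by
        rw [Finset.mem_filter]
        refine ⟨Finset.mem_univ _, ?_⟩
        rw [mid_castSucc, if_neg (by omega), hi0.2]
        simp [emb]
      have h1 : 1 ≤ (Finset.univ.filter
          (fun j => mid k P 0 j = {Fin.castSucc c})).card :=
        Finset.card_pos.mpr ⟨_, hmem⟩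
      calc k + 1 = (k + 1) * 1 := by ring
        _ ≤ _ := Nat.mul_le_mul_left _ h1
  simp [g, hkey]

include hrule hprop hsp in
lemma g_sp : Strategyproof (k + 1) k k (g f) := by
  intro P P' i hP hP' hvar hss hbad
  have hvar' := mid0_ivariant P P' i hvar
  have hss' : mid k P' 0 (Fin.castSucc i) ⊂ mid k P 0 (Fin.castSucc i) := by
    rw [mid_castSucc, mid_castSucc, if_neg (by omega), if_neg (by omega)]
    exact (Finset.image_ssubset_image (Fin.castSucc_injective _)).mpr hss
  refine hsp (mid k P 0) (mid k P' 0) (Fin.castSucc i)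
    (mid_valid k P hP 0) (mid_valid k P' hP' 0) hvar' hss' ?_
  have hPi : mid k P 0 (Fin.castSucc i) = emb k (P i) := by
    rw [mid_castSucc, if_neg (by omega)]
  rw [hPi, inter_emb f P (P i), inter_emb f P' (P i)]
  exact (Finset.image_ssubset_image (Fin.castSucc_injective _)).mpr hbad

end Main
end Lemma5

/-- **Lemma 5 (induction step on `k`).** Let `k ≥ 2`. If there exists a proportional and
strategyproof committee rule for committee size `k + 1`, `k + 1` voters and `k + 2`
candidates, then there exists such a rule for committee size `k`, `k` voters and
`k + 1` candidates. -/
theorem induction_step_k (k : ℕ) (hk : 2 ≤ k) :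
    (∃ f : (Fin (k + 1) → Finset (Fin (k + 2))) → Finset (Fin (k + 2)),
        IsCommitteeRule (k + 2) (k + 1) (k + 1) f ∧
        Proportional (k + 2) (k + 1) (k + 1) f ∧
        Strategyproof (k + 2) (k + 1) (k + 1) f) →
    (∃ f : (Fin k → Finset (Fin (k + 1))) → Finset (Fin (k + 1)),
        IsCommitteeRule (k + 1) k k f ∧ Proportional (k + 1) k k f ∧
        Strategyproof (k + 1) k k f) := by
  rintro ⟨f, hrule, hprop, hsp⟩
  exact ⟨Lemma5.g f, fun P hP => Lemma5.g_card f hrule hprop hsp P hP,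
    Lemma5.g_prop f hrule hprop hsp (by omega), Lemma5.g_sp f hrule hprop hsp⟩
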